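/- Fix α > 0 and define x = r* - α - √α and f^α(x) = ∫_{-α-√α}^{x} dt/(t^2 + α^2). Then: (i) for -α ≤ x ≤ 0, f^α(x) > (x + α)/(2α^2); (ii) for 0 ≤ x ≤ α, f^α(x) > (x + α)/(x^2 + α^2) - 1/(2α). -/

import Mathlib

theorem stmt_3 (α : ℝ) (hα : 0 < α) (f : ℝ → ℝ)
    (hf : ∀ x : ℝ, f x = ∫ t in (-α - Real.sqrt α)..x, 1 / (t ^ 2 + α ^ 2)) :
    (∀ x : ℝ, -α ≤ x → x ≤ 0 → (x + α) / (2 * α ^ 2) < f x) ∧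
    (∀ x : ℝ, 0 ≤ x → x ≤ α → (x + α) / (x ^ 2 + α ^ 2) - 1 / (2 * α) < f x) := by
  have hsq : 0 < Real.sqrt α := Real.sqrt_pos.mpr hα
  have hcont : Continuous fun t : ℝ => 1 / (t ^ 2 + α ^ 2) := by
    apply Continuous.div continuous_const (by continuity)
    intro t
    positivity
  have hint : ∀ a b : ℝ, IntervalIntegrable (fun t : ℝ => 1 / (t ^ 2 + α ^ 2))
      MeasureTheory.volume a b := fun a b => hcont.intervalIntegrable a b
  have h1 : ∀ x : ℝ, -α ≤ x → x ≤ 0 → (x + α) / (2 * α ^ 2) < f x := by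
    intro x hx1 hx2
    rw [hf]
    rw [← intervalIntegral.integral_add_adjacent_intervals (hint _ (-α)) (hint _ _)]
    have hpos : 0 < ∫ t in (-α - Real.sqrt α)..(-α), 1 / (t ^ 2 + α ^ 2) := by
      apply intervalIntegral.intervalIntegral_pos_of_pos_on (hint _ _)
      · intro t _
        positivity
      · linarith
    have h2 : (x + α) / (2 * α ^ 2) ≤ ∫ t in (-α)..x, 1 / (t ^ 2 + α ^ 2) := by
      have hconst : ∫ _t in (-α)..x, (1 / (2 * α ^ 2) : ℝ) = (x + α) / (2 * α ^ 2) := by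
        rw [intervalIntegral.integral_const, smul_eq_mul]
        ring
      rw [← hconst]
      apply intervalIntegral.integral_mono_on hx1 (intervalIntegrable_const) (hint _ _)
      intro t ht
      have ht1 : -α ≤ t := ht.1
      have ht2 : t ≤ x := ht.2
      have htsq : t ^ 2 ≤ α ^ 2 := sq_le_sq' ht1 (by linarith)
      have h0 : (0 : ℝ) < t ^ 2 + α ^ 2 := by positivity
      apply one_div_le_one_div_of_le h0
      nlinarith
    linarith
  refine ⟨h1, ?_⟩
  intro x hx1 hx2
  set g : ℝ → ℝ := fun t => (t + α) / (t ^ 2 + α ^ 2) with hg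
  have hg' : ∀ t : ℝ, HasDerivAt g ((α ^ 2 - 2 * α * t - t ^ 2) / (t ^ 2 + α ^ 2) ^ 2) t := by
    intro t
    have h0 : t ^ 2 + α ^ 2 ≠ 0 := by positivity
    have hd := ((hasDerivAt_id t).add_const α).div
      (((hasDerivAt_pow 2 t)).add_const (α ^ 2)) h0
    convert hd using 1
    · rfl
    · rfl
    · rfl
    simp only [id_eq]
    field_simp
    ring
  have hgc : Continuous fun t : ℝ => (α ^ 2 - 2 * α * t - t ^ 2) / (t ^ 2 + α ^ 2) ^ 2 := by
    apply Continuous.div (by continuity) (by continuity)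
    intro t
    positivity
  rw [hf]
  rw [← intervalIntegral.integral_add_adjacent_intervals (hint _ 0) (hint _ _)]
  have hf0 : 1 / (2 * α) < ∫ t in (-α - Real.sqrt α)..(0 : ℝ), 1 / (t ^ 2 + α ^ 2) := by
    have := h1 0 (by linarith) le_rfl
    rw [hf] at this
    have he : (0 + α) / (2 * α ^ 2) = 1 / (2 * α) := by
      field_simp
      ring
    linarith [he ▸ this]
  have hftc : ∫ t in (0 : ℝ)..x, (α ^ 2 - 2 * α * t - t ^ 2) / (t ^ 2 + α ^ 2) ^ 2
      = g x - g 0 :=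
    intervalIntegral.integral_eq_sub_of_hasDerivAt (fun t _ => hg' t)
      (hgc.intervalIntegrable _ _)
  have hmono : ∫ t in (0 : ℝ)..x, (α ^ 2 - 2 * α * t - t ^ 2) / (t ^ 2 + α ^ 2) ^ 2
      ≤ ∫ t in (0 : ℝ)..x, 1 / (t ^ 2 + α ^ 2) := by
    apply intervalIntegral.integral_mono_on hx1 (hgc.intervalIntegrable _ _) (hint _ _)
    intro t ht
    have ht1 : 0 ≤ t := ht.1
    have h0 : (0 : ℝ) < t ^ 2 + α ^ 2 := by positivity
    rw [div_le_div_iff₀ (by positivity) h0]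
    nlinarith [mul_nonneg (mul_nonneg ht1 (show (0:ℝ) ≤ t + α by linarith)) h0.le]
  have hg0 : g 0 = 1 / α := by
    simp only [hg]
    rw [show (0:ℝ) + α = α by ring, show (0:ℝ) ^ 2 + α ^ 2 = α ^ 2 by ring, sq]
    field_simp
  have hgx : g x = (x + α) / (x ^ 2 + α ^ 2) := rfl
  have h2a : 1 / (2 * α) + 1 / (2 * α) = 1 / α := by
    rw [← add_div]
    rw [show (2:ℝ) * α = α * 2 by ring, ← div_div]
    ring
  linarith
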